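/- Let R be a commutative Noetherian ring and let (M_i)_{i ∈ I} be an arbitrary (possibly infinite) family of flat R-modules. Then the product module ∏_{i ∈ I} M_i is a flat R-module. -/

import Mathlib

open TensorProduct LinearMap Function

section Aux

variable {R : Type*} [CommRing R] {I : Type*} (M : I → Type*)
  [∀ i, AddCommGroup (M i)] [∀ i, Module R (M i)]

lemma stmt13_naturality {N N' : Type*} [AddCommGroup N] [Module R N]
    [AddCommGroup N'] [Module R N'] (h : N →ₗ[R] N') (x : N ⊗[R] (∀ i, M i)) (i : I) :
    piRightHom R R N' M (rTensor (∀ i, M i) h x) i = rTensor (M i) h (piRightHom R R N M x i) := by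
  induction x using TensorProduct.induction_on with
  | zero => simp
  | tmul n p => simp [piRightHom_tmul]
  | add a b ha hb => simp [ha, hb]

noncomputable def stmt13Equiv (n : ℕ) (Q : Type*) [AddCommGroup Q] [Module R Q] :
    ((Fin n → R) ⊗[R] Q) ≃ₗ[R] (Fin n → Q) :=
  (TensorProduct.comm R _ Q) ≪≫ₗ TensorProduct.piScalarRight R R Q (Fin n)

lemma stmt13Equiv_tmul (n : ℕ) (Q : Type*) [AddCommGroup Q] [Module R Q]
    (v : Fin n → R) (q : Q) (t : Fin n) :
    stmt13Equiv n Q (v ⊗ₜ q) t = v t • q := by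
  simp [stmt13Equiv, piScalarRightHom_tmul]

noncomputable def stmt13Inv (n : ℕ) :
    (∀ i, (Fin n → R) ⊗[R] M i) →ₗ[R] (Fin n → R) ⊗[R] (∀ i, M i) :=
  ∑ t, (TensorProduct.mk R (Fin n → R) (∀ i, M i) (Pi.single t 1)) ∘ₗ
    (LinearMap.pi fun i => (LinearMap.proj t) ∘ₗ
      ((stmt13Equiv n (M i)).toLinearMap ∘ₗ LinearMap.proj i))

lemma stmt13Inv_apply (n : ℕ) (w : ∀ i, (Fin n → R) ⊗[R] M i) :
    stmt13Inv M n w = ∑ t, Pi.single t (1 : R) ⊗ₜ fun i => stmt13Equiv n (M i) (w i) t := by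
  simp [stmt13Inv, LinearMap.sum_apply, LinearMap.pi_apply, TensorProduct.mk_apply]
  rfl

lemma stmt13_single_sum (n : ℕ) (v : Fin n → R) :
    ∑ t, v t • (Pi.single t (1 : R) : Fin n → R) = v := by
  ext s
  simp [Pi.single_apply]

lemma stmt13_bij_free (n : ℕ) :
    Function.Bijective (piRightHom R R (Fin n → R) M) := by
  rw [Function.bijective_iff_has_inverse]
  refine ⟨stmt13Inv M n, fun x => ?_, fun w => ?_⟩
  · induction x using TensorProduct.induction_on with
    | zero => simp
    | tmul v p =>
        rw [piRightHom_tmul, stmt13Inv_apply]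
        have h1 : ∀ t, (fun i => stmt13Equiv n (M i) ((fun j => v ⊗ₜ[R] p j) i) t) = v t • p :=
          fun t => funext fun i => by rw [stmt13Equiv_tmul]; rfl
        calc ∑ t, Pi.single t (1 : R) ⊗ₜ[R]
                (fun i => stmt13Equiv n (M i) ((fun j => v ⊗ₜ[R] p j) i) t)
            = ∑ t, (v t • (Pi.single t (1 : R) : Fin n → R)) ⊗ₜ[R] p := by
              refine Finset.sum_congr rfl fun t _ => ?_
              rw [h1 t, tmul_smul, smul_tmul']
          _ = v ⊗ₜ p := by rw [← sum_tmul, stmt13_single_sum]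
    | add a b ha hb => rw [map_add, map_add, ha, hb]
  · funext i
    rw [stmt13Inv_apply, map_sum]
    apply (stmt13Equiv (R := R) n (M i)).injective
    simp only [Finset.sum_apply, map_sum]
    ext s
    simp only [piRightHom_tmul, Finset.sum_apply]
    have : ∀ t, stmt13Equiv n (M i) ((Pi.single t (1 : R) : Fin n → R) ⊗ₜ stmt13Equiv n (M i) (w i) t) s
        = (Pi.single t (1 : R) : Fin n → R) s • stmt13Equiv n (M i) (w i) t := fun t => by
      rw [stmt13Equiv_tmul]
    simp_rw [this, Pi.single_apply]
    simp [ite_smul]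

lemma stmt13_piRightHom_injective {n m : ℕ} {N : Type*} [AddCommGroup N] [Module R N]
    (g : (Fin m → R) →ₗ[R] (Fin n → R)) (π : (Fin n → R) →ₗ[R] N)
    (hsur : Function.Surjective π) (hker : LinearMap.range g = LinearMap.ker π) :
    Function.Injective (piRightHom R R N M) := by
  set P := ∀ i, M i
  rw [injective_iff_map_eq_zero]
  intro x hx
  obtain ⟨y, rfl⟩ := LinearMap.rTensor_surjective P hsur x
  have hexact : Function.Exact g π := LinearMap.exact_iff.mpr hker.symm
  have hex : ∀ i, Function.Exact (rTensor (M i) g) (rTensor (M i) π) :=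
    fun i => rTensor_exact (M i) hexact hsur
  have hcomp : ∀ i, rTensor (M i) π (piRightHom R R (Fin n → R) M y i) = 0 := by
    intro i
    rw [← stmt13_naturality, hx]
    rfl
  choose u hu using fun i => (hex i _).mp (hcomp i)
  obtain ⟨w, hw⟩ := (stmt13_bij_free M m).2 u
  have hy : rTensor P g w = y := by
    apply (stmt13_bij_free M n).1
    funext i
    rw [stmt13_naturality, hw]
    exact hu i
  rw [← hy, ← rTensor_comp_apply]
  have hzero : ∀ v, π (g v) = 0 := fun v => by
    have h := LinearMap.mem_range_self g v
    rw [hker] at h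
    exact h
  have : π ∘ₗ g = 0 := LinearMap.ext fun v => hzero v
  rw [this]
  simp

end Aux

/-- Over a commutative Noetherian ring, an arbitrary product of flat modules
is flat. -/
theorem stmt13 {R : Type*} [CommRing R] [IsNoetherianRing R]
    {I : Type*} (M : I → Type*) [∀ i, AddCommGroup (M i)] [∀ i, Module R (M i)]
    (hM : ∀ i, Module.Flat R (M i)) :
    Module.Flat R (∀ i, M i) := by
  set P := ∀ i, M i
  rw [Module.Flat.iff_rTensor_injective]
  intro J hJ
  haveI : Module.Finite R J := Module.Finite.iff_fg.mpr hJ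
  obtain ⟨n, π, hπ⟩ := Module.Finite.exists_fin' R J
  obtain ⟨m, s, hs⟩ := Submodule.fg_iff_exists_fin_generating_family.mp
    (IsNoetherian.noetherian (LinearMap.ker π))
  set g : (Fin m → R) →ₗ[R] (Fin n → R) := Fintype.linearCombination R s
  have hrange : LinearMap.range g = LinearMap.ker π := by
    rw [Fintype.range_linearCombination, hs]
  have hinj := stmt13_piRightHom_injective M g π hπ hrange
  have h2 : ∀ i, Function.Injective (rTensor (M i) J.subtype) :=
    fun i => (Module.Flat.iff_rTensor_injective (R := R) (M := M i)).mp (hM i) hJ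
  rw [injective_iff_map_eq_zero]
  intro x hx
  apply hinj
  rw [map_zero]
  funext i
  apply h2 i
  rw [← stmt13_naturality, hx]
  simp
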